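/- Let G be a finite simple bipartite graph with at least 2 edges. Then G is χ-vertex-stable if and only if every vertex v of G satisfies deg(v) < |E(G)|, where deg(v) is the degree of v and |E(G)| is the number of edges of G. -/

import Mathlib

open SimpleGraph

/-- The independence number of a graph: the maximum size of an independent set. -/
noncomputable def indNum {V : Type*} (G : SimpleGraph V) : ℕ :=
  sSup {n | ∃ s : Finset V, (∀ a ∈ s, ∀ b ∈ s, a ≠ b → ¬ G.Adj a b) ∧ s.card = n}

/-- The vertex cover number of a graph: the minimum size of a vertex cover. -/
noncomputable def covNum {V : Type*} (G : SimpleGraph V) : ℕ :=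
  sInf {n | ∃ s : Finset V, (∀ a b : V, G.Adj a b → a ∈ s ∨ b ∈ s) ∧ s.card = n}

/-- The clique number of a graph: the maximum size of a clique. -/
noncomputable def clNum {V : Type*} (G : SimpleGraph V) : ℕ :=
  sSup {n | ∃ s : Finset V, G.IsNClique n s}

/-- The graph obtained from `G` by adding the edge `{u, v}`. -/
def adjoinEdge {V : Type*} (G : SimpleGraph V) (u v : V) : SimpleGraph V :=
  G ⊔ SimpleGraph.fromEdgeSet {s(u, v)}

/-- `G` contains the path `P₃` as an induced subgraph. -/
def HasInducedP3 {V : Type*} (G : SimpleGraph V) : Prop :=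
  ∃ u v w : V, u ≠ v ∧ v ≠ w ∧ u ≠ w ∧ G.Adj u v ∧ G.Adj v w ∧ ¬ G.Adj u w

/-- `G` is bipartite: its vertex set can be partitioned into two sets such that
every edge joins a vertex of one set to a vertex of the other. -/
def IsBipartite {V : Type*} (G : SimpleGraph V) : Prop :=
  ∃ s : Set V, ∀ ⦃a b : V⦄, G.Adj a b → (a ∈ s ∧ b ∉ s) ∨ (a ∉ s ∧ b ∈ s)

lemma chrom_two_aux {W : Type*} (H : SimpleGraph W) (hb : _root_.IsBipartite H)
    (hne : ∃ a b, H.Adj a b) : H.chromaticNumber = 2 := by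
  classical
  obtain ⟨s, hs⟩ := hb
  have hcol : H.Colorable 2 :=
    ⟨SimpleGraph.Coloring.mk (fun w => if w ∈ s then 0 else 1) (by
      intro a b hab
      rcases hs hab with ⟨h1, h2⟩ | ⟨h1, h2⟩ <;> simp [h1, h2])⟩
  have hub : H.chromaticNumber ≤ (2 : ℕ) := hcol.chromaticNumber_le
  have hlb : ¬ H.Colorable 1 := by
    rintro ⟨C⟩
    obtain ⟨a, b, hab⟩ := hne
    exact C.valid hab (Subsingleton.elim _ _)
  have h1 : ¬ H.chromaticNumber ≤ (1 : ℕ) := by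
    rw [SimpleGraph.chromaticNumber_le_iff_colorable]; exact hlb
  have h2 : (2 : ℕ∞) ≤ H.chromaticNumber := by
    have := Order.add_one_le_of_lt (not_le.mp h1)
    simpa [one_add_one_eq_two] using this
  exact le_antisymm (by exact_mod_cast hub) h2

lemma chrom_le_one_aux {W : Type*} (H : SimpleGraph W)
    (hne : ∀ a b, ¬ H.Adj a b) : H.chromaticNumber ≤ 1 := by
  have hcol : H.Colorable 1 :=
    ⟨SimpleGraph.Coloring.mk (fun _ => 0) (fun {a b} hab => absurd hab (hne a b))⟩
  exact_mod_cast hcol.chromaticNumber_le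

/-- A finite bipartite graph with at least 2 edges is χ-vertex-stable iff every
vertex has degree strictly less than the number of edges. -/
theorem bipartite_chi_vertexStable_iff {V : Type*} [Fintype V] [DecidableEq V]
    (G : SimpleGraph V) [DecidableRel G.Adj] (hb : _root_.IsBipartite G)
    (h2 : 2 ≤ G.edgeFinset.card) :
    (∀ v : V, (G.induce ({v}ᶜ : Set V)).chromaticNumber = G.chromaticNumber) ↔
    (∀ v : V, G.degree v < G.edgeFinset.card) := by
  classical
  have hGedge : ∃ a b, G.Adj a b := by
    have : G.edgeFinset.Nonempty := Finset.card_pos.mp (by omega)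
    obtain ⟨e, he⟩ := this
    induction e with
    | h a b =>
      exact ⟨a, b, by simpa [SimpleGraph.mem_edgeFinset] using he⟩
  have hG2 : G.chromaticNumber = 2 := chrom_two_aux G hb hGedge
  have hsub : ∀ v : V, G.incidenceFinset v ⊆ G.edgeFinset := by
    intro v e he
    rw [SimpleGraph.mem_incidenceFinset] at he
    exact SimpleGraph.mem_edgeFinset.mpr he.1
  constructor
  · intro hst v
    by_contra hlt
    have hdeg : G.degree v = G.edgeFinset.card := by
      have h1 : G.degree v ≤ G.edgeFinset.card := by
        rw [← G.card_incidenceFinset_eq_degree v]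
        exact Finset.card_le_card (hsub v)
      omega
    have heq : G.incidenceFinset v = G.edgeFinset := by
      apply Finset.eq_of_subset_of_card_le (hsub v)
      rw [G.card_incidenceFinset_eq_degree v, hdeg]
    have hno : ∀ a b : ({v}ᶜ : Set V), ¬ (G.induce ({v}ᶜ : Set V)).Adj a b := by
      rintro ⟨a, ha⟩ ⟨b, hb'⟩ hab
      have hadj : G.Adj a b := hab
      have : s(a, b) ∈ G.incidenceFinset v := by
        rw [heq]; exact SimpleGraph.mem_edgeFinset.mpr hadj
      rw [SimpleGraph.mem_incidenceFinset] at this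
      have hv : v ∈ (s(a, b) : Sym2 V) := this.2
      rw [Sym2.mem_iff] at hv
      rcases hv with rfl | rfl
      · exact ha rfl
      · exact hb' rfl
    have h1 := chrom_le_one_aux _ hno
    rw [hst v, hG2] at h1
    norm_num at h1
  · intro hdeg v
    rw [hG2]
    apply chrom_two_aux
    · obtain ⟨s, hs⟩ := hb
      exact ⟨{x : ({v}ᶜ : Set V) | (x : V) ∈ s}, fun a b hab => by
        rcases hs hab with ⟨h1, h2⟩ | ⟨h1, h2⟩
        · exact Or.inl ⟨h1, h2⟩
        · exact Or.inr ⟨h1, h2⟩⟩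
    · have hssub : G.incidenceFinset v ⊂ G.edgeFinset := by
        refine lt_of_le_of_ne (hsub v) ?_
        intro h
        have := hdeg v
        rw [← G.card_incidenceFinset_eq_degree v, h] at this
        omega
      obtain ⟨e, he, hne⟩ := Finset.exists_of_ssubset hssub
      induction e with
      | h a b =>
        have hadj : G.Adj a b := SimpleGraph.mem_edgeFinset.mp he
        have hva : a ≠ v := by
          rintro rfl
          exact hne ((SimpleGraph.mem_incidenceFinset _ _ _).mpr ⟨hadj, Sym2.mem_mk_left _ _⟩)
        have hvb : b ≠ v := by
          rintro rfl
          exact hne ((SimpleGraph.mem_incidenceFinset _ _ _).mpr ⟨hadj, Sym2.mem_mk_right _ _⟩)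
        exact ⟨⟨a, hva⟩, ⟨b, hvb⟩, hadj⟩
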